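/- Let λ > 0, let j ≥ 1 be an integer, set λ_j = 2^j·λ, and let k₀ ≥ 1 be an integer. Let X₁, X₂ be independent Poisson random variables with mean λ_j, and X₃, X₄ be independent Poisson random variables with mean λ_j/2, all four mutually independent. Set r = (1 + 2^{-5})^{-1/2}, p_H = P(X₃ − X₄ ≥ k₀), p_BH = P(X₁ − X₂ + 8(X₃ − X₄) ≥ ⌈8k₀/r⌉), and A(λ_j) = P(X₁ − X₂ ≥ 9). Then p_BH ≤ p_H + A(λ_j)·(1 − 2·p_H). -/

import Mathlib

open MeasureTheory ProbabilityTheory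
open scoped NNReal ENNReal

private lemma zmeas (s : Set ℤ) : MeasurableSet s := s.to_countable.measurableSet

private lemma zzmeas (s : Set (ℤ × ℤ)) : MeasurableSet s := s.to_countable.measurableSet

/-- For a symmetric probability measure on ℤ, the two tails at levels summing ≥ 1
have total mass ≤ 1. -/
private lemma tail_pair_le_one (ν : Measure ℤ) [IsProbabilityMeasure ν]
    (hsym : ν.map (fun x => -x) = ν) (m s : ℤ) (hm : 1 ≤ m) :
    ν {d | m ≤ s + 8 * d} + ν {d | m ≤ -s + 8 * d} ≤ 1 := by
  have h1 : ν {d : ℤ | m ≤ -s + 8 * d} = ν {d : ℤ | s + 8 * d ≤ -m} := by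
    conv_lhs => rw [← hsym]
    rw [Measure.map_apply (measurable_of_countable _) (zmeas _)]
    congr 1
    ext d
    simp only [Set.mem_preimage, Set.mem_setOf_eq]
    omega
  have h2 : {d : ℤ | s + 8 * d ≤ -m} ⊆ {d : ℤ | m ≤ s + 8 * d}ᶜ := by
    intro d hd
    simp only [Set.mem_compl_iff, Set.mem_setOf_eq] at *
    omega
  calc ν {d | m ≤ s + 8 * d} + ν {d | m ≤ -s + 8 * d}
      ≤ ν {d | m ≤ s + 8 * d} + ν {d | m ≤ s + 8 * d}ᶜ := by
        rw [h1]; exact add_le_add le_rfl (measure_mono h2)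
    _ = 1 := prob_add_prob_compl (zmeas _)

/-- Core inequality for independent symmetric integer random variables. -/
private lemma core (σm ν : Measure ℤ) [IsProbabilityMeasure σm] [IsProbabilityMeasure ν]
    (hσ : σm.map (fun x => -x) = σm) (hν : ν.map (fun x => -x) = ν)
    (m k₀ : ℤ) (hm : 8 * k₀ + 1 ≤ m) (hk : 1 ≤ k₀) :
    (σm.prod ν) {p : ℤ × ℤ | m ≤ p.1 + 8 * p.2} ≤
      ν {d | k₀ ≤ d} * σm {s | -8 ≤ s ∧ s ≤ 8} + σm {s | 9 ≤ s} := by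
  have hm1 : (1 : ℤ) ≤ m := by omega
  set f : ℤ → ℝ≥0∞ := fun s => ν {d | m ≤ s + 8 * d} with hf
  have hfm : Measurable f := measurable_of_countable _
  have hprod : (σm.prod ν) {p : ℤ × ℤ | m ≤ p.1 + 8 * p.2} = ∫⁻ s, f s ∂σm := by
    rw [Measure.prod_apply (zzmeas _)]
    rfl
  set E : Set ℤ := {s | -8 ≤ s ∧ s ≤ 8} with hE
  have hsplit : ∫⁻ s, f s ∂σm = (∫⁻ s in E, f s ∂σm) + ∫⁻ s in Eᶜ, f s ∂σm :=
    (lintegral_add_compl f (zmeas E)).symm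
  -- middle part
  have hmid : ∫⁻ s in E, f s ∂σm ≤ ν {d | k₀ ≤ d} * σm E := by
    calc ∫⁻ s in E, f s ∂σm ≤ ∫⁻ _ in E, ν {d | k₀ ≤ d} ∂σm := by
          refine setLIntegral_mono measurable_const (fun s hs => ?_)
          refine measure_mono (fun d hd => ?_)
          rw [hE] at hs
          simp only [Set.mem_setOf_eq] at hs hd ⊢
          omega
      _ = ν {d | k₀ ≤ d} * σm E := setLIntegral_const _ _
  -- tails part
  have hEc : Eᶜ = {s : ℤ | s ≤ -9} ∪ {s : ℤ | 9 ≤ s} := by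
    ext s; simp only [Set.mem_compl_iff, Set.mem_setOf_eq, Set.mem_union, hE]; omega
  have hdisj : Disjoint {s : ℤ | s ≤ -9} {s : ℤ | 9 ≤ s} := by
    rw [Set.disjoint_left]; intro s hs hs'
    simp only [Set.mem_setOf_eq] at *; omega
  have hpre : (fun x : ℤ => -x) ⁻¹' {s : ℤ | s ≤ -9} = {s : ℤ | 9 ≤ s} := by
    ext s; simp only [Set.mem_preimage, Set.mem_setOf_eq]; omega
  have hneg : ∫⁻ s in {s : ℤ | s ≤ -9}, f s ∂σm = ∫⁻ s in {s : ℤ | 9 ≤ s}, f (-s) ∂σm := by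
    conv_lhs => rw [← hσ]
    rw [setLIntegral_map (zmeas _) hfm (measurable_of_countable _), hpre]
  have hcomb : ∫⁻ s in {s : ℤ | 9 ≤ s}, f (-s) ∂σm + ∫⁻ s in {s : ℤ | 9 ≤ s}, f s ∂σm
      = ∫⁻ s in {s : ℤ | 9 ≤ s}, (f (-s) + f s) ∂σm :=
    (lintegral_add_left (measurable_of_countable _) _).symm
  have htails : ∫⁻ s in Eᶜ, f s ∂σm ≤ σm {s | 9 ≤ s} := by
    rw [hEc, lintegral_union (zmeas _) hdisj, hneg, hcomb]
    calc ∫⁻ s in {s : ℤ | 9 ≤ s}, (f (-s) + f s) ∂σm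
        ≤ ∫⁻ _ in {s : ℤ | 9 ≤ s}, 1 ∂σm := by
          refine setLIntegral_mono measurable_const (fun s _ => ?_)
          rw [add_comm]
          exact tail_pair_le_one ν hν m s hm1
      _ = σm {s | 9 ≤ s} := setLIntegral_one _
  rw [hprod, hsplit]
  exact add_le_add hmid htails

theorem stmt0_pBH_le_pH_add_A
    {Ω : Type*} [MeasurableSpace Ω] (μ : Measure Ω) [IsProbabilityMeasure μ]
    (lam : ℝ≥0) (hlam : 0 < lam) (j : ℕ) (hj : 1 ≤ j) (lamj : ℝ≥0)
    (hlamj : lamj = 2 ^ j * lam)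
    (k₀ : ℤ) (hk₀ : 1 ≤ k₀)
    (X : Fin 4 → Ω → ℕ) (hXmeas : ∀ i, Measurable (X i))
    (hindep : iIndepFun X μ)
    (hX0 : Measure.map (X 0) μ = poissonMeasure lamj)
    (hX1 : Measure.map (X 1) μ = poissonMeasure lamj)
    (hX2 : Measure.map (X 2) μ = poissonMeasure (lamj / 2))
    (hX3 : Measure.map (X 3) μ = poissonMeasure (lamj / 2))
    (r : ℝ) (hr : r = (1 + 2 ^ (-5 : ℤ) : ℝ) ^ (-(1 / 2) : ℝ))
    (pH pBH A : ℝ)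
    (hpH : pH = (μ {ω | k₀ ≤ (X 2 ω : ℤ) - (X 3 ω : ℤ)}).toReal)
    (hpBH : pBH = (μ {ω | (⌈(8 * (k₀ : ℝ)) / r⌉ : ℤ) ≤
        (X 0 ω : ℤ) - (X 1 ω : ℤ) + 8 * ((X 2 ω : ℤ) - (X 3 ω : ℤ))}).toReal)
    (hA : A = (μ {ω | (9 : ℤ) ≤ (X 0 ω : ℤ) - (X 1 ω : ℤ)}).toReal) :
    pBH ≤ pH + A * (1 - 2 * pH) := by
  classical
  -- the critical threshold
  set m : ℤ := ⌈(8 * (k₀ : ℝ)) / r⌉ with hmdef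
  have hrpos : 0 < r := by
    rw [hr]; exact Real.rpow_pos_of_pos (by norm_num) _
  have hrlt : r < 1 := by
    rw [hr]; exact Real.rpow_lt_one_of_one_lt_of_neg (by norm_num) (by norm_num)
  have hm : 8 * k₀ + 1 ≤ m := by
    have h1 : (8 * (k₀ : ℝ)) < 8 * (k₀ : ℝ) / r := by
      rw [lt_div_iff₀ hrpos]
      have : (0 : ℝ) < 8 * (k₀ : ℝ) := by positivity
      nlinarith
    have h2 : (8 * k₀ : ℤ) < m := by
      rw [hmdef]
      refine Int.lt_ceil.mpr ?_
      push_cast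
      linarith
    omega
  -- random variables S and D
  set S : Ω → ℤ := fun ω => (X 0 ω : ℤ) - (X 1 ω : ℤ) with hSdef
  set D : Ω → ℤ := fun ω => (X 2 ω : ℤ) - (X 3 ω : ℤ) with hDdef
  have hcast : Measurable (fun n : ℕ => (n : ℤ)) := measurable_of_countable _
  have hS : Measurable S := ((hcast.comp (hXmeas 0)).sub (hcast.comp (hXmeas 1)))
  have hD : Measurable D := ((hcast.comp (hXmeas 2)).sub (hcast.comp (hXmeas 3)))
  set σm : Measure ℤ := μ.map S with hσdef
  set ν : Measure ℤ := μ.map D with hνdef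
  haveI : IsProbabilityMeasure σm := Measure.isProbabilityMeasure_map hS.aemeasurable
  haveI : IsProbabilityMeasure ν := Measure.isProbabilityMeasure_map hD.aemeasurable
  -- the difference map
  set g : ℕ × ℕ → ℤ := fun p => (p.1 : ℤ) - (p.2 : ℤ) with hgdef
  have hg : Measurable g := measurable_of_countable _
  -- symmetry of a difference of two iid variables
  have symm_of_pair : ∀ (a b : Fin 4), a ≠ b → Measure.map (X a) μ = Measure.map (X b) μ →
      (μ.map (fun ω => (X a ω : ℤ) - (X b ω : ℤ))).map (fun x : ℤ => -x)
        = μ.map (fun ω => (X a ω : ℤ) - (X b ω : ℤ)) := by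
    intro a b hab hlaw
    have hab' : IndepFun (X a) (X b) μ := hindep.indepFun hab
    have hba' : IndepFun (X b) (X a) μ := hab'.symm
    have hpab : μ.map (fun ω => (X a ω, X b ω)) = (μ.map (X a)).prod (μ.map (X b)) :=
      (indepFun_iff_map_prod_eq_prod_map_map (hXmeas a).aemeasurable
        (hXmeas b).aemeasurable).mp hab'
    have hpba : μ.map (fun ω => (X b ω, X a ω)) = (μ.map (X b)).prod (μ.map (X a)) :=
      (indepFun_iff_map_prod_eq_prod_map_map (hXmeas b).aemeasurable
        (hXmeas a).aemeasurable).mp hba'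
    have hpeq : μ.map (fun ω => (X a ω, X b ω)) = μ.map (fun ω => (X b ω, X a ω)) := by
      rw [hpab, hpba, hlaw]
    have hpairab : Measurable (fun ω => (X a ω, X b ω)) := (hXmeas a).prodMk (hXmeas b)
    have hpairba : Measurable (fun ω => (X b ω, X a ω)) := (hXmeas b).prodMk (hXmeas a)
    have e1 : (μ.map (fun ω => (X a ω : ℤ) - (X b ω : ℤ))).map (fun x : ℤ => -x)
        = μ.map (fun ω => (X b ω : ℤ) - (X a ω : ℤ)) := by
      have : μ.map (fun ω => (X a ω : ℤ) - (X b ω : ℤ))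
          = μ.map (g ∘ (fun ω => (X a ω, X b ω))) := rfl
      rw [this, ← Measure.map_map hg hpairab, Measure.map_map (measurable_of_countable _) hg,
        Measure.map_map ((measurable_of_countable (fun x : ℤ => -x)).comp hg) hpairab]
      have : ((fun x : ℤ => -x) ∘ g) ∘ (fun ω => (X a ω, X b ω))
          = fun ω => (X b ω : ℤ) - (X a ω : ℤ) := by
        funext ω
        change -((X a ω : ℤ) - (X b ω : ℤ)) = (X b ω : ℤ) - (X a ω : ℤ)
        ring
      rw [this]
    have e2 : μ.map (fun ω => (X b ω : ℤ) - (X a ω : ℤ))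
        = μ.map (fun ω => (X a ω : ℤ) - (X b ω : ℤ)) := by
      have h1 : μ.map (fun ω => (X b ω : ℤ) - (X a ω : ℤ))
          = (μ.map (fun ω => (X b ω, X a ω))).map g :=
        (Measure.map_map hg hpairba).symm
      have h2 : μ.map (fun ω => (X a ω : ℤ) - (X b ω : ℤ))
          = (μ.map (fun ω => (X a ω, X b ω))).map g :=
        (Measure.map_map hg hpairab).symm
      rw [h1, h2, hpeq]
    rw [e1, e2]
  have hσsym : σm.map (fun x : ℤ => -x) = σm :=
    symm_of_pair 0 1 (by decide) (by rw [hX0, hX1])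
  have hνsym : ν.map (fun x : ℤ => -x) = ν :=
    symm_of_pair 2 3 (by decide) (by rw [hX2, hX3])
  -- independence of S and D
  have hSD : IndepFun S D μ := by
    have h := hindep.indepFun_prodMk_prodMk hXmeas 0 1 2 3
      (by decide) (by decide) (by decide) (by decide)
    exact h.comp hg hg
  have hprodlaw : μ.map (fun ω => (S ω, D ω)) = σm.prod ν :=
    (indepFun_iff_map_prod_eq_prod_map_map hS.aemeasurable hD.aemeasurable).mp hSD
  -- rewrite the three probabilities as pushforward measures
  have hpH' : μ {ω | k₀ ≤ (X 2 ω : ℤ) - (X 3 ω : ℤ)} = ν {d | k₀ ≤ d} := by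
    rw [hνdef, Measure.map_apply hD (zmeas _)]; rfl
  have hA' : μ {ω | (9 : ℤ) ≤ (X 0 ω : ℤ) - (X 1 ω : ℤ)} = σm {s | 9 ≤ s} := by
    rw [hσdef, Measure.map_apply hS (zmeas _)]; rfl
  have hpBH' : μ {ω | m ≤ (X 0 ω : ℤ) - (X 1 ω : ℤ) + 8 * ((X 2 ω : ℤ) - (X 3 ω : ℤ))}
      = (σm.prod ν) {p : ℤ × ℤ | m ≤ p.1 + 8 * p.2} := by
    rw [← hprodlaw, Measure.map_apply (hS.prodMk hD) (zzmeas _)]; rfl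
  -- core inequality
  have hcore := core σm ν hσsym hνsym m k₀ hm hk₀
  -- pass to real numbers
  set E : Set ℤ := {s | -8 ≤ s ∧ s ≤ 8} with hE
  have hfin : ν {d | k₀ ≤ d} * σm E + σm {s | 9 ≤ s} ≠ ∞ :=
    ENNReal.add_ne_top.mpr ⟨ENNReal.mul_ne_top (measure_ne_top _ _) (measure_ne_top _ _),
      measure_ne_top _ _⟩
  have hBHle : pBH ≤ pH * (σm E).toReal + A := by
    rw [hpBH, hpBH', hpH, hpH', hA, hA']
    calc ((σm.prod ν) {p : ℤ × ℤ | m ≤ p.1 + 8 * p.2}).toReal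
        ≤ (ν {d | k₀ ≤ d} * σm E + σm {s | 9 ≤ s}).toReal :=
          ENNReal.toReal_mono hfin hcore
      _ = (ν {d | k₀ ≤ d}).toReal * (σm E).toReal + (σm {s | 9 ≤ s}).toReal := by
          rw [ENNReal.toReal_add (ENNReal.mul_ne_top (measure_ne_top _ _) (measure_ne_top _ _))
            (measure_ne_top _ _), ENNReal.toReal_mul]
  -- σm E = 1 - 2 A
  have hnegtail : σm {s : ℤ | s ≤ -9} = σm {s : ℤ | 9 ≤ s} := by
    conv_lhs => rw [← hσsym]
    rw [Measure.map_apply (measurable_of_countable _) (zmeas _)]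
    congr 1
    ext s
    simp only [Set.mem_preimage, Set.mem_setOf_eq]
    omega
  have hpart : σm E + σm {s : ℤ | s ≤ -9} + σm {s : ℤ | 9 ≤ s} = 1 := by
    have h1 : E ∪ ({s : ℤ | s ≤ -9} ∪ {s : ℤ | 9 ≤ s}) = Set.univ := by
      ext s; simp only [Set.mem_union, Set.mem_setOf_eq, Set.mem_univ, iff_true, hE]; omega
    have hd1 : Disjoint {s : ℤ | s ≤ -9} {s : ℤ | 9 ≤ s} := by
      rw [Set.disjoint_left]; intro s hs hs'
      simp only [Set.mem_setOf_eq] at *; omega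
    have hd2 : Disjoint E ({s : ℤ | s ≤ -9} ∪ {s : ℤ | 9 ≤ s}) := by
      rw [Set.disjoint_left]; intro s hs hs'
      simp only [Set.mem_union, Set.mem_setOf_eq, hE] at *; omega
    have := measure_union (μ := σm) hd2 ((zmeas _).union (zmeas _))
    rw [h1] at this
    rw [measure_union (μ := σm) hd1 (zmeas _)] at this
    rw [add_assoc]
    rw [← this, measure_univ]
  have hEreal : (σm E).toReal = 1 - 2 * A := by
    have := congrArg ENNReal.toReal hpart
    rw [ENNReal.toReal_add (ENNReal.add_ne_top.mpr ⟨measure_ne_top _ _, measure_ne_top _ _⟩)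
      (measure_ne_top _ _), ENNReal.toReal_add (measure_ne_top _ _) (measure_ne_top _ _),
      ENNReal.toReal_one, hnegtail] at this
    rw [hA, hA'] at *
    linarith
  rw [hEreal] at hBHle
  have hpHnn : 0 ≤ pH := by rw [hpH]; exact ENNReal.toReal_nonneg
  have hAnn : 0 ≤ A := by rw [hA]; exact ENNReal.toReal_nonneg
  nlinarith [hBHle]
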